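/- Let n ≥ 1, let φ : ℝⁿ → ℂ be an even Schwartz function (φ(−z) = φ(z) for all z), and for each s ∈ (0, 1] define L_s : ℝⁿ → ℂ by L_s(ξ) := s^{−2} ( ∫_{ℝⁿ} φ(z) dz − ∫_{ℝⁿ} e^{i s ⟨z, ξ⟩} φ(z) dz ). Then for every order k ∈ ℕ there is a constant C_k > 0 such that for all s ∈ (0, 1] and all ξ ∈ ℝⁿ, ‖ (k-th iterated derivative of L_s at ξ) ‖ ≤ C_k (1 + |ξ|)^{2 − k}. (In other words, the family {L_s : s ∈ (0,1]} is bounded in the symbol class S², i.e. each ξ-derivative of order k is bounded by ⟨ξ⟩^{2−k} uniformly in s.) -/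

import Mathlib

set_option maxHeartbeats 1000000

open MeasureTheory FourierTransform Real

private lemma fderiv_even_eq_zero' {V W : Type*} [NormedAddCommGroup V] [NormedSpace ℝ V]
    [NormedAddCommGroup W] [NormedSpace ℝ W]
    {f : V → W} (hf : Differentiable ℝ f) (he : ∀ x, f (-x) = f x) :
    fderiv ℝ f 0 = 0 := by
  set m : V →L[ℝ] V := -(ContinuousLinearMap.id ℝ V) with hm
  have hmc : ⇑m = fun x : V => -x := by funext x; simp [hm]
  have h2 : fderiv ℝ (f ∘ m) 0 = (fderiv ℝ f 0).comp m := by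
    rw [fderiv_comp 0 (by simpa [hmc] using hf (m 0)) m.differentiableAt, m.fderiv]
    congr 1
    simp [hmc]
  have h1 : (f ∘ ⇑m) = f := by funext x; simp [hmc, he]
  rw [h1] at h2
  ext v
  have h3 := congrFun (congrArg DFunLike.coe h2) v
  simp only [ContinuousLinearMap.comp_apply, ContinuousLinearMap.neg_apply,
    ContinuousLinearMap.id_apply, map_neg, hm] at h3
  have h4 : (2 : ℝ) • (fderiv ℝ f 0 v) = 0 := by
    rw [two_smul]; nth_rewrite 1 [h3]; simp
  rcases smul_eq_zero.mp h4 with h | h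
  · norm_num at h
  · simpa using h

private lemma norm_iteratedFDeriv_one'' {V W : Type*} [NormedAddCommGroup V] [NormedSpace ℝ V]
    [NormedAddCommGroup W] [NormedSpace ℝ W] (g : V → W) (x : V) :
    ‖iteratedFDeriv ℝ 1 g x‖ = ‖fderiv ℝ g x‖ := by
  rw [← norm_iteratedFDeriv_fderiv, norm_iteratedFDeriv_zero]

private lemma iFD_comp_bound' {n : ℕ} (ψ : SchwartzMap (EuclideanSpace ℝ (Fin n)) ℂ)
    (A : EuclideanSpace ℝ (Fin n) →L[ℝ] EuclideanSpace ℝ (Fin n)) (k : ℕ) (hk : k ≠ 0)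
    (ξ : EuclideanSpace ℝ (Fin n)) :
    ‖iteratedFDeriv ℝ k (fun ξ' => ψ 0 - ψ (A ξ')) ξ‖
      ≤ ‖iteratedFDeriv ℝ k (⇑ψ) (A ξ)‖ * ‖A‖ ^ k := by
  have hcomp : ContDiff ℝ k (fun ξ' => ψ (A ξ')) := (ψ.smooth k).comp A.contDiff
  have h1 : (fun ξ' : EuclideanSpace ℝ (Fin n) => ψ 0 - ψ (A ξ'))
      = (fun _ : EuclideanSpace ℝ (Fin n) => ψ 0) + (-(fun x => ψ (A x))) := by
    funext x; simp [sub_eq_add_neg]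
  have hneg : ContDiff ℝ k (-(fun x : EuclideanSpace ℝ (Fin n) => ψ (A x))) := by
    exact hcomp.neg
  rw [h1, iteratedFDeriv_add_apply contDiff_const.contDiffAt hneg.contDiffAt,
    iteratedFDeriv_const_of_ne hk, iteratedFDeriv_neg_apply]
  simp only [Pi.zero_apply, ContinuousMultilinearMap.zero_apply, zero_add, norm_neg]
  have h2 : iteratedFDeriv ℝ k (fun ξ' => ψ (A ξ')) ξ
      = (iteratedFDeriv ℝ k (⇑ψ) (A ξ)).compContinuousLinearMap fun _ => A := by
    have := A.iteratedFDeriv_comp_right (f := ⇑ψ) (ψ.smooth ⊤) ξ (i := k)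
      (by exact_mod_cast le_top)
    simpa [Function.comp_def] using this
  rw [h2]
  calc ‖(iteratedFDeriv ℝ k (⇑ψ) (A ξ)).compContinuousLinearMap fun _ => A‖
      ≤ ‖iteratedFDeriv ℝ k (⇑ψ) (A ξ)‖ * ∏ _i : Fin k, ‖A‖ :=
        ContinuousMultilinearMap.norm_compContinuousLinearMap_le _ _
    _ = ‖iteratedFDeriv ℝ k (⇑ψ) (A ξ)‖ * ‖A‖ ^ k := by
        rw [Finset.prod_const, Finset.card_univ, Fintype.card_fin]

/-- Uniform `S²` symbol estimate for the family of rescaled graph-Laplacian symbols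
`L_s(ξ) := s^{-2}(∫ φ − ∫ e^{is⟨z,ξ⟩} φ(z) dz)`, `s ∈ (0,1]`, with `φ` an even
Schwartz function: every `ξ`-derivative of order `k` is bounded by
`(1+|ξ|)^{2-k}` uniformly in `s`. -/
theorem graph_laplacian_symbol_class_two (n : ℕ) (hn : 0 < n)
    (φ : SchwartzMap (EuclideanSpace ℝ (Fin n)) ℂ)
    (heven : ∀ z : EuclideanSpace ℝ (Fin n), φ (-z) = φ z) :
    ∀ k : ℕ, ∃ C : ℝ, 0 < C ∧ ∀ s : ℝ, 0 < s → s ≤ 1 →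
      ∀ ξ : EuclideanSpace ℝ (Fin n),
        ‖iteratedFDeriv ℝ k
            (fun ξ' : EuclideanSpace ℝ (Fin n) =>
              (((s ^ 2)⁻¹ : ℝ) : ℂ) *
                ((∫ z : EuclideanSpace ℝ (Fin n), φ z)
                  - ∫ z : EuclideanSpace ℝ (Fin n),
                      Complex.exp (Complex.I * ((s * (inner ℝ z ξ' : ℝ) : ℝ) : ℂ)) * φ z)) ξ‖
          ≤ C * (1 + ‖ξ‖) ^ ((2 : ℝ) - (k : ℝ)) := by
  intro k
  set V := EuclideanSpace ℝ (Fin n) with hV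
  set ψ : SchwartzMap V ℂ := SchwartzMap.fourierTransformCLM ℝ φ with hψ
  -- evenness of the Fourier transform
  have hψeven : ∀ w : V, ψ (-w) = ψ w := by
    intro w
    rw [hψ, SchwartzMap.fourierTransformCLM_apply,
      SchwartzMap.fourier_coe, Real.fourier_eq, Real.fourier_eq]
    rw [← integral_neg_eq_self (μ := volume) (fun v => 𝐞 (-(inner ℝ v (-w) : ℝ)) • φ v)]
    congr 1
    funext v
    rw [heven]
    congr 2
    simp [inner_neg_neg, inner_neg_left]
  have hdiff : Differentiable ℝ (⇑ψ) :=
    (ψ.smooth ⊤).differentiable (by simp)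
  have hDψ0 : fderiv ℝ (⇑ψ) 0 = 0 := fderiv_even_eq_zero' hdiff hψeven
  obtain ⟨M2, hM2pos, hM2⟩ := ψ.decay 0 2
  simp only [pow_zero, one_mul] at hM2
  -- second derivative bound
  have hfd2 : ∀ x : V, ‖fderiv ℝ (fderiv ℝ (⇑ψ)) x‖ ≤ M2 := by
    intro x
    rw [← norm_iteratedFDeriv_one'' (fderiv ℝ (⇑ψ)) x, norm_iteratedFDeriv_fderiv]
    exact hM2 x
  have hfdder : Differentiable ℝ (fderiv ℝ (⇑ψ)) :=
    (contDiff_infty_iff_fderiv.mp (ψ.smooth ⊤)).2.differentiable (by simp)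
  -- first derivative bound: ‖ψ'(x)‖ ≤ M2 ‖x‖
  have hfd : ∀ x : V, ‖fderiv ℝ (⇑ψ) x‖ ≤ M2 * ‖x‖ := by
    intro x
    have := Convex.norm_image_sub_le_of_norm_fderiv_le
      (fun y (_ : y ∈ (Set.univ : Set V)) => (hfdder y)) (fun y _ => hfd2 y)
      convex_univ (Set.mem_univ 0) (Set.mem_univ x)
    simpa [hDψ0, sub_zero] using this
  -- zeroth order bound: ‖ψ(0) - ψ(w)‖ ≤ M2 ‖w‖²
  have hval : ∀ w : V, ‖ψ 0 - ψ w‖ ≤ M2 * (‖w‖ * ‖w‖) := by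
    intro w
    have hmem0 : (0 : V) ∈ Metric.closedBall (0 : V) ‖w‖ :=
      Metric.mem_closedBall_self (norm_nonneg w)
    have hmemw : w ∈ Metric.closedBall (0 : V) ‖w‖ := by
      simp [Metric.mem_closedBall]
    have hb : ∀ y ∈ Metric.closedBall (0 : V) ‖w‖, ‖fderiv ℝ (⇑ψ) y‖ ≤ M2 * ‖w‖ := by
      intro y hy
      refine (hfd y).trans ?_
      have : ‖y‖ ≤ ‖w‖ := by simpa [Metric.mem_closedBall, dist_zero_right] using hy
      exact mul_le_mul_of_nonneg_left this hM2pos.le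
    have := Convex.norm_image_sub_le_of_norm_fderiv_le
      (fun y _ => (hdiff y)) hb (convex_closedBall _ _) hmem0 hmemw
    calc ‖ψ 0 - ψ w‖ = ‖ψ w - ψ 0‖ := norm_sub_rev _ _
      _ ≤ M2 * ‖w‖ * ‖w - 0‖ := this
      _ = M2 * (‖w‖ * ‖w‖) := by rw [sub_zero, mul_assoc]
  -- Schwartz seminorm bound for derivatives of order k
  set D : ℝ := 2 ^ k *
    ((Finset.Iic (k, k)).sup (fun m => SchwartzMap.seminorm ℝ m.1 m.2) ψ : ℝ) with hD
  have hsem : ∀ (j : ℕ), j ≤ k → ∀ w : V,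
      (1 + ‖w‖) ^ j * ‖iteratedFDeriv ℝ k (⇑ψ) w‖ ≤ D := by
    intro j hj w
    exact SchwartzMap.one_add_le_sup_seminorm_apply (𝕜 := ℝ) (m := (k, k)) hj le_rfl ψ w
  have hD0 : 0 ≤ D := by
    have := hsem 0 (Nat.zero_le k) 0
    have h0 : (0:ℝ) ≤ (1 + ‖(0:V)‖) ^ 0 * ‖iteratedFDeriv ℝ k (⇑ψ) 0‖ := by positivity
    linarith
  refine ⟨max (max M2 D) 1, lt_of_lt_of_le one_pos (le_max_right _ _), ?_⟩
  set C : ℝ := max (max M2 D) 1 with hC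
  have hCM2 : M2 ≤ C := le_trans (le_max_left _ _) (le_max_left _ _)
  have hCD : D ≤ C := le_trans (le_max_right _ _) (le_max_left _ _)
  have hC0 : (0:ℝ) < C := lt_of_lt_of_le one_pos (le_max_right _ _)
  intro s hs hs1 ξ
  -- basic scaling facts
  have hπ1 : (1:ℝ) ≤ 2 * π := by nlinarith [Real.pi_gt_three]
  set a : ℝ := s / (2 * π) with ha
  have ha0 : 0 < a := by positivity
  have has : a ≤ s := by
    rw [ha]
    exact div_le_self hs.le hπ1
  have ha1 : a ≤ 1 := le_trans has hs1
  set A : V →L[ℝ] V := (-a) • ContinuousLinearMap.id ℝ V with hA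
  have hAx : ∀ x : V, A x = (-a) • x := by intro x; simp [hA]
  have hAnx : ∀ x : V, ‖A x‖ = a * ‖x‖ := by
    intro x
    rw [hAx, norm_smul, Real.norm_eq_abs, abs_neg, abs_of_pos ha0]
  have hAn : ‖A‖ ≤ a :=
    ContinuousLinearMap.opNorm_le_bound _ ha0.le (fun x => le_of_eq (hAnx x))
  -- rewrite the symbol via the Fourier transform
  have hint1 : (∫ z : V, φ z) = ψ 0 := by
    rw [hψ, SchwartzMap.fourierTransformCLM_apply, SchwartzMap.fourier_coe, Real.fourier_eq']
    congr 1
    funext z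
    simp
  have hint2 : ∀ ξ' : V, (∫ z : V,
      Complex.exp (Complex.I * ((s * (inner ℝ z ξ' : ℝ) : ℝ) : ℂ)) * φ z) = ψ (A ξ') := by
    intro ξ'
    rw [hψ, SchwartzMap.fourierTransformCLM_apply, SchwartzMap.fourier_coe, Real.fourier_eq', hAx]
    congr 1
    funext z
    rw [real_inner_smul_right, smul_eq_mul]
    have harg : -2 * π * (-a * (inner ℝ z ξ' : ℝ)) = s * (inner ℝ z ξ' : ℝ) := by
      rw [ha]; field_simp
    rw [harg, mul_comm (Complex.I)]
  have hfun : (fun ξ' : V =>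
      (((s ^ 2)⁻¹ : ℝ) : ℂ) *
        ((∫ z : V, φ z) - ∫ z : V,
          Complex.exp (Complex.I * ((s * (inner ℝ z ξ' : ℝ) : ℝ) : ℂ)) * φ z))
      = fun ξ' : V => ((s ^ 2)⁻¹ : ℝ) • (ψ 0 - ψ (A ξ')) := by
    funext ξ'
    rw [hint1, hint2 ξ', Complex.real_smul]
  have hG : ContDiff ℝ k (fun ξ' : V => ψ 0 - ψ (A ξ')) :=
    contDiff_const.sub ((ψ.smooth k).comp A.contDiff)
  have hs2 : (0:ℝ) < s ^ 2 := by positivity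
  have hnorm : ‖iteratedFDeriv ℝ k
      (fun ξ' : V =>
        (((s ^ 2)⁻¹ : ℝ) : ℂ) *
          ((∫ z : V, φ z) - ∫ z : V,
            Complex.exp (Complex.I * ((s * (inner ℝ z ξ' : ℝ) : ℝ) : ℂ)) * φ z)) ξ‖
      = (s ^ 2)⁻¹ * ‖iteratedFDeriv ℝ k (fun ξ' : V => ψ 0 - ψ (A ξ')) ξ‖ := by
    rw [hfun, iteratedFDeriv_const_smul_apply' hG.contDiffAt, norm_smul, Real.norm_eq_abs,
      abs_of_pos (inv_pos.mpr hs2)]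
  rw [hnorm]
  set t : ℝ := ‖ξ‖ with ht
  have ht0 : (0:ℝ) ≤ t := norm_nonneg ξ
  have h1t : (0:ℝ) < 1 + t := by linarith
  -- now case on k
  match k, hsem, hG, hnorm with
  | 0, hsem, hG, hnorm =>
    -- exponent simplification
    have hexp : (1 + t) ^ ((2:ℝ) - ((0:ℕ):ℝ)) = (1 + t) ^ (2:ℕ) := by
      rw [show (2:ℝ) - ((0:ℕ):ℝ) = ((2:ℕ):ℝ) by norm_num, Real.rpow_natCast]
    rw [norm_iteratedFDeriv_zero]
    push_cast
    rw [show (2:ℝ) - 0 = ((2:ℕ):ℝ) by norm_num, Real.rpow_natCast]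
    have h1 : ‖ψ 0 - ψ (A ξ)‖ ≤ M2 * (a * t * (a * t)) := by
      have := hval (A ξ)
      rwa [hAnx ξ, ← ht] at this
    rw [inv_mul_le_iff₀ hs2]
    calc ‖ψ 0 - ψ (A ξ)‖ ≤ M2 * (a * t * (a * t)) := h1
      _ ≤ C * (s * t * (s * t)) := by
          apply mul_le_mul hCM2 _ (by positivity) hC0.le
          have hat : a * t ≤ s * t := mul_le_mul_of_nonneg_right has ht0
          exact mul_le_mul hat hat (by positivity) (by positivity)
      _ = (C * s ^ 2) * t ^ 2 := by ring
      _ ≤ (C * s ^ 2) * (1 + t) ^ 2 := by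
          apply mul_le_mul_of_nonneg_left _ (by positivity)
          nlinarith
      _ = s ^ 2 * (C * (1 + t) ^ (2:ℕ)) := by ring
  | 1, hsem, hG, hnorm =>
    push_cast
    rw [show (2:ℝ) - 1 = ((1:ℕ):ℝ) by norm_num, Real.rpow_natCast, pow_one]
    have hcb := iFD_comp_bound' ψ A 1 one_ne_zero ξ
    have h1 : ‖iteratedFDeriv ℝ 1 (⇑ψ) (A ξ)‖ ≤ M2 * (a * t) := by
      rw [norm_iteratedFDeriv_one'']
      have := hfd (A ξ)
      rwa [hAnx ξ, ← ht] at this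
    have h2 : ‖iteratedFDeriv ℝ 1 (fun ξ' : V => ψ 0 - ψ (A ξ')) ξ‖ ≤ M2 * (a * t) * a := by
      refine hcb.trans ?_
      rw [pow_one]
      exact mul_le_mul h1 hAn (norm_nonneg _) (by positivity)
    rw [inv_mul_le_iff₀ hs2]
    calc ‖iteratedFDeriv ℝ 1 (fun ξ' : V => ψ 0 - ψ (A ξ')) ξ‖ ≤ M2 * (a * t) * a := h2
      _ ≤ C * (s * t) * s := by
          have hat : a * t ≤ s * t := mul_le_mul_of_nonneg_right has ht0
          exact mul_le_mul (mul_le_mul hCM2 hat (by positivity) hC0.le) has ha0.le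
            (by positivity)
      _ = (C * s ^ 2) * t := by ring
      _ ≤ (C * s ^ 2) * (1 + t) := by
          apply mul_le_mul_of_nonneg_left _ (by positivity)
          linarith
      _ = s ^ 2 * (C * (1 + t)) := by ring
  | (m + 2), hsem, hG, hnorm =>
    have hexp : ((2:ℝ) - ((m + 2 : ℕ):ℝ)) = -((m:ℕ):ℝ) := by push_cast; ring
    rw [hexp, Real.rpow_neg h1t.le, Real.rpow_natCast]
    have hk0 : (m + 2 : ℕ) ≠ 0 := by omega
    have hcb := iFD_comp_bound' ψ A (m + 2) hk0 ξ
    set P : ℝ := (1 + t) ^ m with hP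
    have hPpos : (0:ℝ) < P := by positivity
    -- key bound on the derivative of ψ at A ξ
    have hsemA := hsem m (by omega) (A ξ)
    rw [hAnx ξ, ← ht] at hsemA
    have hQ : a ^ m * P ≤ (1 + a * t) ^ m := by
      rw [hP, ← mul_pow]
      apply pow_le_pow_left₀ (by positivity)
      nlinarith
    have h3 : ‖iteratedFDeriv ℝ (m+2) (⇑ψ) (A ξ)‖ * (a ^ m * P) ≤ C := by
      calc ‖iteratedFDeriv ℝ (m+2) (⇑ψ) (A ξ)‖ * (a ^ m * P)
          ≤ ‖iteratedFDeriv ℝ (m+2) (⇑ψ) (A ξ)‖ * (1 + a * t) ^ m :=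
            mul_le_mul_of_nonneg_left hQ (norm_nonneg _)
        _ = (1 + a * t) ^ m * ‖iteratedFDeriv ℝ (m+2) (⇑ψ) (A ξ)‖ := mul_comm _ _
        _ ≤ D := hsemA
        _ ≤ C := hCD
    rw [inv_mul_le_iff₀ hs2]
    have hgoal2 : ‖iteratedFDeriv ℝ (m+2) (fun ξ' : V => ψ 0 - ψ (A ξ')) ξ‖ * P
        ≤ C * s ^ 2 := by
      calc ‖iteratedFDeriv ℝ (m+2) (fun ξ' : V => ψ 0 - ψ (A ξ')) ξ‖ * P
          ≤ (‖iteratedFDeriv ℝ (m+2) (⇑ψ) (A ξ)‖ * ‖A‖ ^ (m+2)) * P :=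
            mul_le_mul_of_nonneg_right hcb hPpos.le
        _ ≤ (‖iteratedFDeriv ℝ (m+2) (⇑ψ) (A ξ)‖ * a ^ (m+2)) * P := by
            apply mul_le_mul_of_nonneg_right _ hPpos.le
            exact mul_le_mul_of_nonneg_left
              (pow_le_pow_left₀ (norm_nonneg A) hAn _) (norm_nonneg _)
        _ = (‖iteratedFDeriv ℝ (m+2) (⇑ψ) (A ξ)‖ * (a ^ m * P)) * a ^ 2 := by ring
        _ ≤ C * a ^ 2 := mul_le_mul_of_nonneg_right h3 (by positivity)
        _ ≤ C * s ^ 2 := by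
            apply mul_le_mul_of_nonneg_left _ hC0.le
            exact pow_le_pow_left₀ ha0.le has 2
    -- convert division goal
    have := (le_div_iff₀ hPpos).mpr hgoal2
    calc ‖iteratedFDeriv ℝ (m+2) (fun ξ' : V => ψ 0 - ψ (A ξ')) ξ‖
        ≤ C * s ^ 2 / P := this
      _ = s ^ 2 * (C * P⁻¹) := by field_simp
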